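/- Under the hypotheses that K ∈ B(H) has closed range, {Λ_ω}, {Γ_ω} are c-g-Bessel families with ⟨Kf, h⟩ = ∫_Ω ⟨Λ_ω* Γ_ω f, h⟩ dμ(ω) for all f, h, and Θ_ω = Γ_ω (K†|_{R(K)}), the families {Λ_ω} and {Θ_ω} are interchangeable on R(K): for all f, h ∈ R(K), ⟨f, h⟩ = ∫_Ω ⟨Λ_ω* Θ_ω f, h⟩ dμ(ω) = ∫_Ω ⟨Θ_ω* Λ_ω f, h⟩ dμ(ω). -/

import Mathlib

open MeasureTheory ContinuousLinearMap

local notation "⟪" x ", " y "⟫" => @inner ℂ _ _ x y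

/-- `{Λ_ω}` and `{Θ_ω}`, where `Θ_ω = Γ_ω ∘ K†`, are interchangeable on `R(K)`:
for `f, h ∈ R(K)`, `⟨f, h⟩ = ∫ ⟨Λ_ω* Θ_ω f, h⟩ dμ = ∫ ⟨Θ_ω* Λ_ω f, h⟩ dμ`. -/
theorem interchangeable_on_range
    {H E Ω : Type*} [NormedAddCommGroup H] [InnerProductSpace ℂ H] [CompleteSpace H]
    [NormedAddCommGroup E] [InnerProductSpace ℂ E] [CompleteSpace E]
    [MeasurableSpace Ω] (μ : Measure Ω)
    (K : H →L[ℂ] H) (hK : IsClosed (LinearMap.range (K : H →ₗ[ℂ] H) : Set H))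
    (Kdag : H →L[ℂ] H) (hKdag : ∀ f ∈ LinearMap.range (K : H →ₗ[ℂ] H), K (Kdag f) = f)
    (Λ Γ : Ω → (H →L[ℂ] E))
    (hmeasΛ : ∀ f : H, StronglyMeasurable fun ω => Λ ω f)
    (hmeasΓ : ∀ f : H, StronglyMeasurable fun ω => Γ ω f)
    (BΛ : ℝ) (hBΛ : 0 < BΛ)
    (hBesselΛ : ∀ f : H, ∫ ω, ‖Λ ω f‖ ^ 2 ∂μ ≤ BΛ * ‖f‖ ^ 2)
    (B : ℝ) (hB : 0 < B)
    (hBesselΓ : ∀ f : H, ∫ ω, ‖Γ ω f‖ ^ 2 ∂μ ≤ B * ‖f‖ ^ 2)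
    (hrel : ∀ f h : H, ⟪K f, h⟫ = ∫ ω, ⟪(Λ ω).adjoint (Γ ω f), h⟫ ∂μ) :
    ∀ f ∈ LinearMap.range (K : H →ₗ[ℂ] H), ∀ h ∈ LinearMap.range (K : H →ₗ[ℂ] H),
      ⟪f, h⟫ = ∫ ω, ⟪(Λ ω).adjoint (Γ ω (Kdag f)), h⟫ ∂μ ∧
      ⟪f, h⟫ = ∫ ω, ⟪((Γ ω).comp Kdag).adjoint (Λ ω f), h⟫ ∂μ := by
  intro f hf h hh
  constructor
  · calc ⟪f, h⟫ = ⟪K (Kdag f), h⟫ := by rw [hKdag f hf]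
      _ = _ := hrel (Kdag f) h
  · have key : ⟪h, f⟫ = ∫ ω, ⟪(Λ ω).adjoint (Γ ω (Kdag h)), f⟫ ∂μ := by
      calc ⟪h, f⟫ = ⟪K (Kdag h), f⟫ := by rw [hKdag h hh]
        _ = _ := hrel (Kdag h) f
    calc ⟪f, h⟫ = starRingEnd ℂ ⟪h, f⟫ := (inner_conj_symm _ _).symm
      _ = starRingEnd ℂ (∫ ω, ⟪(Λ ω).adjoint (Γ ω (Kdag h)), f⟫ ∂μ) := by rw [key]
      _ = ∫ ω, starRingEnd ℂ ⟪(Λ ω).adjoint (Γ ω (Kdag h)), f⟫ ∂μ := integral_conj.symm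
      _ = ∫ ω, ⟪((Γ ω).comp Kdag).adjoint (Λ ω f), h⟫ ∂μ := by
          congr 1; ext ω
          rw [inner_conj_symm, adjoint_inner_right, adjoint_inner_left, coe_comp', Function.comp_apply]
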